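/- Let B be a complex Banach space, L : B → B a bounded linear operator, and ρ > 0. Assume there exists C > 0 such that ‖Lⁿ‖ ≤ C ρⁿ for all n ∈ ℕ. Then for every λ ∈ ℂ with |λ| = ρ one has ker((L − λ·Id)²) = ker(L − λ·Id); that is, no eigenvalue of modulus ρ admits a nontrivial Jordan block. -/

import Mathlib

/-- If a bounded operator `L` on a complex Banach space satisfies
`‖Lⁿ‖ ≤ C ρⁿ` for all `n`, then no eigenvalue of modulus `ρ` admits a nontrivial Jordan
block: `ker((L − λ·Id)²) = ker(L − λ·Id)` whenever `|λ| = ρ`. -/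
theorem stmt2 {B : Type*} [NormedAddCommGroup B] [NormedSpace ℂ B] [CompleteSpace B]
    (L : B →L[ℂ] B) (ρ : ℝ) (hρ : 0 < ρ)
    (h : ∃ C > 0, ∀ n : ℕ, ‖L ^ n‖ ≤ C * ρ ^ n) :
    ∀ lam : ℂ, ‖lam‖ = ρ →
      LinearMap.ker (((L - lam • (1 : B →L[ℂ] B)) ^ 2 : B →L[ℂ] B) : B →ₗ[ℂ] B)
        = LinearMap.ker ((L - lam • (1 : B →L[ℂ] B) : B →L[ℂ] B) : B →ₗ[ℂ] B) := by
  obtain ⟨C, hC, hCn⟩ := h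
  intro lam hlam
  set T := L - lam • (1 : B →L[ℂ] B) with hT
  ext x
  simp only [LinearMap.mem_ker, ContinuousLinearMap.coe_coe]
  constructor
  · intro hx
    have hlam0 : lam ≠ 0 := by
      intro h0
      rw [h0, norm_zero] at hlam
      exact hρ.ne' hlam.symm
    set y := T x with hy
    have hTy : T y = 0 := by
      have h2 : (T ^ 2) x = T (T x) := by rw [sq]; rfl
      rw [h2] at hx
      exact hx
    have hLy : L y = lam • y := by
      have h3 : L y - lam • y = 0 := by
        simpa [hT, ContinuousLinearMap.sub_apply] using hTy
      exact sub_eq_zero.mp h3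
    have hLx : L x = lam • x + y := by
      have h3 : L x - lam • x = y := by
        simpa [hT, ContinuousLinearMap.sub_apply] using hy.symm
      rw [← h3]; abel
    set z := lam⁻¹ • y with hz
    have hyz : y = lam • z := (smul_inv_smul₀ hlam0 y).symm
    have hLz : L z = lam • z := by
      rw [hz, map_smul, hLy, smul_comm]
    have key : ∀ n : ℕ, (L ^ n) x = lam ^ n • x + ((n : ℂ) * lam ^ n) • z := by
      intro n
      induction n with
      | zero => simp
      | succ n ih =>
        have : (L ^ (n + 1)) x = L ((L ^ n) x) := by
          rw [pow_succ']; rfl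
        rw [this, ih, map_add, map_smul, map_smul, hLx, hLz, hyz]
        push_cast
        rw [pow_succ]
        module
    -- norm bound
    have hbound : ∀ n : ℕ, (n : ℝ) * ‖z‖ ≤ (C + 1) * ‖x‖ := by
      intro n
      have hρn : (0 : ℝ) < ρ ^ n := pow_pos hρ n
      have h1 : ((n : ℂ) * lam ^ n) • z = (L ^ n) x - lam ^ n • x := by
        rw [key n]; abel
      have h2 : ‖((n : ℂ) * lam ^ n) • z‖ ≤ (C + 1) * ρ ^ n * ‖x‖ := by
        rw [h1]
        calc ‖(L ^ n) x - lam ^ n • x‖ ≤ ‖(L ^ n) x‖ + ‖lam ^ n • x‖ := norm_sub_le _ _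
          _ ≤ ‖L ^ n‖ * ‖x‖ + ρ ^ n * ‖x‖ := by
              rw [norm_smul, norm_pow, hlam]
              gcongr
              exact (L ^ n).le_opNorm x
          _ ≤ C * ρ ^ n * ‖x‖ + ρ ^ n * ‖x‖ := by
              gcongr
              exact hCn n
          _ = (C + 1) * ρ ^ n * ‖x‖ := by ring
      have h3 : ‖((n : ℂ) * lam ^ n) • z‖ = (n : ℝ) * ρ ^ n * ‖z‖ := by
        rw [norm_smul, norm_mul, norm_pow, hlam, Complex.norm_natCast]
      rw [h3] at h2
      nlinarith [norm_nonneg z]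
    have hz0 : z = 0 := by
      by_contra hz0
      have hzpos : 0 < ‖z‖ := norm_pos_iff.mpr hz0
      obtain ⟨n, hn⟩ := exists_nat_gt ((C + 1) * ‖x‖ / ‖z‖)
      have := hbound n
      rw [div_lt_iff₀ hzpos] at hn
      linarith
    show y = 0
    rw [hyz, hz0, smul_zero]
  · intro hx
    have h2 : (T ^ 2) x = T (T x) := by rw [sq]; rfl
    rw [h2, hx, map_zero]
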